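/- Let S = ⊕_{n≥0} S_n be an ℕ-graded commutative ring of prime characteristic p and let σ be a Frobenius splitting of S. Define σ₀ : S → S additively by setting, for x homogeneous of degree m, σ₀(x) equal to the homogeneous component of degree m/p of σ(x) if p divides m, and σ₀(x) = 0 if p does not divide m. Then σ₀ is a Frobenius splitting of S satisfying σ₀(S_{np}) ⊆ S_n for all n and σ₀(S_m) = 0 when p ∤ m; and for every homogeneous ideal I of S with σ(I) ⊆ I one has σ₀(I) ⊆ I. -/

import Mathlib

/-- Let `S = ⊕ₙ Sₙ` be an ℕ-graded commutative ring of prime characteristic `p` and `σ`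
a Frobenius splitting of `S`.  Define `σ₀` additively, on a homogeneous element `x` of
degree `m`, as the degree-`m/p` homogeneous component of `σ x` if `p ∣ m`, and `0`
otherwise.  Then `σ₀` is a Frobenius splitting of `S` with `σ₀ (S_{np}) ⊆ S_n` and
`σ₀ (S_m) = 0` for `p ∤ m`, and `σ₀` compatibly splits every homogeneous ideal that
is compatibly split by `σ`. -/
theorem graded_frobenius_splitting
    {S : Type*} [CommRing S] (p : ℕ) (hp : p.Prime) [CharP S p]
    (𝒜 : ℕ → AddSubgroup S) [GradedRing 𝒜]
    (σ : S → S)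
    (hadd : ∀ a b : S, σ (a + b) = σ a + σ b)
    (hsemilin : ∀ a b : S, σ (a ^ p * b) = a * σ b)
    (hone : σ 1 = 1) :
    ∃ σ₀ : S → S,
      (∀ a b : S, σ₀ (a + b) = σ₀ a + σ₀ b) ∧
      (∀ (m : ℕ) (x : S), x ∈ 𝒜 m →
        σ₀ x = if p ∣ m then GradedRing.proj 𝒜 (m / p) (σ x) else 0) ∧
      (∀ a b : S, σ₀ (a ^ p * b) = a * σ₀ b) ∧
      σ₀ 1 = 1 ∧
      (∀ (n : ℕ) (x : S), x ∈ 𝒜 (n * p) → σ₀ x ∈ 𝒜 n) ∧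
      (∀ (m : ℕ) (x : S), x ∈ 𝒜 m → ¬ p ∣ m → σ₀ x = 0) ∧
      (∀ I : Ideal S,
        (∃ G : Set S, (∀ g ∈ G, ∃ m : ℕ, g ∈ 𝒜 m) ∧ I = Ideal.span G) →
        (∀ a ∈ I, σ a ∈ I) → ∀ a ∈ I, σ₀ a ∈ I) := by
  classical
  haveI : Fact p.Prime := ⟨hp⟩
  set σ' : S →+ S := AddMonoidHom.mk' σ hadd with hσ'
  set g : ∀ m : ℕ, 𝒜 m →+ S := fun m =>
    if p ∣ m then ((GradedRing.proj 𝒜 (m / p)).comp σ').comp (𝒜 m).subtype else 0 with hg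
  set σ₀ : S → S := fun x => DirectSum.toAddMonoid g (DirectSum.decompose 𝒜 x) with hσ₀
  have hadd₀ : ∀ a b : S, σ₀ (a + b) = σ₀ a + σ₀ b := by
    intro a b
    simp only [hσ₀, DirectSum.decompose_add, map_add]
  have hzero₀ : σ₀ 0 = 0 := by simp [hσ₀]
  have hkey : ∀ (m : ℕ) (x : S), x ∈ 𝒜 m →
      σ₀ x = if p ∣ m then GradedRing.proj 𝒜 (m / p) (σ x) else 0 := by
    intro m x hx
    rw [hσ₀]
    simp only
    rw [DirectSum.decompose_of_mem 𝒜 hx, DirectSum.toAddMonoid_of]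
    by_cases h : p ∣ m
    · simp [hg, h, hσ']
    · simp [hg, h]
  have hproj_mul : ∀ (k j : ℕ) (a y : S), a ∈ 𝒜 k →
      GradedRing.proj 𝒜 (k + j) (a * y) = a * GradedRing.proj 𝒜 j y := by
    intro k j a y ha
    induction y using DirectSum.Decomposition.inductionOn 𝒜 with
    | zero => simp
    | @homogeneous i x =>
        have hx : (x : S) ∈ 𝒜 i := x.2
        have hax : a * (x : S) ∈ 𝒜 (k + i) := SetLike.mul_mem_graded ha hx
        by_cases h : i = j
        · subst h
          rw [GradedRing.proj_apply, GradedRing.proj_apply,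
            DirectSum.decompose_of_mem_same 𝒜 hax, DirectSum.decompose_of_mem_same 𝒜 hx]
        · rw [GradedRing.proj_apply, GradedRing.proj_apply,
            DirectSum.decompose_of_mem_ne 𝒜 hax (by omega),
            DirectSum.decompose_of_mem_ne 𝒜 hx h, mul_zero]
    | add x y hx' hy' =>
        rw [mul_add, map_add, hx', hy', map_add, mul_add]
  have hsemi_hom : ∀ (k : ℕ) (a : S), a ∈ 𝒜 k → ∀ b : S, σ₀ (a ^ p * b) = a * σ₀ b := by
    intro k a ha b
    induction b using DirectSum.Decomposition.inductionOn 𝒜 with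
    | zero => simp [hzero₀, hσ₀]
    | @homogeneous m x =>
        have hx : (x : S) ∈ 𝒜 m := x.2
        have hap : a ^ p ∈ 𝒜 (p * k) := by
          simpa [smul_eq_mul] using SetLike.pow_mem_graded p ha
        have hmem : a ^ p * (x : S) ∈ 𝒜 (p * k + m) := SetLike.mul_mem_graded hap hx
        rw [hkey _ _ hmem, hkey m x hx, hsemilin]
        by_cases h : p ∣ m
        · rw [if_pos ((dvd_mul_right p k).add h), if_pos h]
          obtain ⟨c, rfl⟩ := h
          have h1 : (p * k + p * c) / p = k + c := by
            rw [← Nat.mul_add, Nat.mul_div_cancel_left _ hp.pos]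
          have h2 : p * c / p = c := Nat.mul_div_cancel_left _ hp.pos
          rw [h1, h2, hproj_mul k c a _ ha]
        · rw [if_neg (fun hd => h ((Nat.dvd_add_right (dvd_mul_right p k)).mp hd)),
            if_neg h, mul_zero]
    | add x y hx' hy' =>
        rw [mul_add, hadd₀, hx', hy', ← mul_add, ← hadd₀]
  have hsemi₀ : ∀ a b : S, σ₀ (a ^ p * b) = a * σ₀ b := by
    intro a b
    induction a using DirectSum.Decomposition.inductionOn 𝒜 with
    | zero => rw [zero_pow hp.ne_zero, zero_mul, hzero₀, zero_mul]
    | @homogeneous k x => exact hsemi_hom k x x.2 b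
    | add x y hx' hy' =>
        rw [add_pow_char, add_mul, hadd₀, hx', hy', add_mul]
  have hone₀ : σ₀ 1 = 1 := by
    rw [hkey 0 1 (SetLike.one_mem_graded 𝒜), if_pos (dvd_zero p), Nat.zero_div, hone,
      GradedRing.proj_apply, DirectSum.decompose_of_mem_same 𝒜 (SetLike.one_mem_graded 𝒜)]
  refine ⟨σ₀, hadd₀, hkey, hsemi₀, hone₀, ?_, ?_, ?_⟩
  · intro n x hx
    rw [hkey _ _ hx, if_pos (dvd_mul_left p n), Nat.mul_div_cancel _ hp.pos,
      GradedRing.proj_apply]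
    exact SetLike.coe_mem _
  · intro m x hx hnd
    rw [hkey m x hx, if_neg hnd]
  · rintro I ⟨G, hG, rfl⟩ hσI a ha
    have hI : Ideal.IsHomogeneous 𝒜 (Ideal.span G) :=
      Ideal.homogeneous_span 𝒜 G fun x hx => hG x hx
    have hsum : ∀ (s : Finset ℕ) (f : ℕ → S), σ₀ (∑ i ∈ s, f i) = ∑ i ∈ s, σ₀ (f i) := by
      intro s f
      induction s using Finset.induction with
      | empty => simpa using hzero₀
      | insert _ _ h ih => rw [Finset.sum_insert h, hadd₀, ih, Finset.sum_insert h]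
    rw [← DirectSum.sum_support_decompose 𝒜 a, hsum]
    refine Ideal.sum_mem _ fun m _ => ?_
    have hxm : (DirectSum.decompose 𝒜 a m : S) ∈ 𝒜 m := SetLike.coe_mem _
    have hxI : (DirectSum.decompose 𝒜 a m : S) ∈ Ideal.span G := hI m ha
    rw [hkey m _ hxm]
    by_cases h : p ∣ m
    · rw [if_pos h, GradedRing.proj_apply]
      exact hI _ (hσI _ hxI)
    · rw [if_neg h]; exact Ideal.zero_mem _
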